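/- The constant C₂ = ∏_{ν=1}^∞ ζ(2ν) satisfies 1/C₂ = ∏_p p^{1/12} · η(i·log(p)/π), where the product runs over all primes p and η is the Dedekind eta function. -/

import Mathlib

open Complex

/-- The Dedekind eta function η(τ) = e^{πiτ/12} ∏_{ν=1}^∞ (1 − e^{2πiντ}). -/
noncomputable def dedekindEta (τ : ℂ) : ℂ :=
  Complex.exp (Real.pi * Complex.I * τ / 12) *
    ∏' ν : ℕ, (1 - Complex.exp (2 * Real.pi * Complex.I * ((ν : ℂ) + 1) * τ))


namespace C2Aux

noncomputable def xx (p : {p : ℕ // p.Prime}) (ν : ℕ) : ℝ :=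
  (p : ℝ) ^ (-(2 * ((ν : ℝ) + 1)))

noncomputable def LL (p : {p : ℕ // p.Prime}) (ν : ℕ) : ℝ :=
  Real.log (1 - xx p ν)

lemma p_pos (p : {p : ℕ // p.Prime}) : (0:ℝ) < (p : ℝ) := by
  exact_mod_cast p.2.pos

lemma p_two (p : {p : ℕ // p.Prime}) : (2:ℝ) ≤ (p : ℝ) := by
  exact_mod_cast p.2.two_le

lemma xx_pos (p : {p : ℕ // p.Prime}) (ν : ℕ) : 0 < xx p ν :=
  Real.rpow_pos_of_pos (p_pos p) _

lemma xx_le (p : {p : ℕ // p.Prime}) (ν : ℕ) : xx p ν ≤ 1/4 := by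
  have h1 : (4:ℝ) ≤ (p : ℝ) ^ (2 * ((ν : ℝ) + 1)) := by
    calc (4:ℝ) = (2:ℝ) ^ (2:ℝ) := by
          rw [show (2:ℝ) = ((2:ℕ):ℝ) by norm_num, Real.rpow_natCast]; norm_num
    _ ≤ (2:ℝ) ^ (2 * ((ν : ℝ) + 1)) := by
          apply Real.rpow_le_rpow_of_exponent_le (by norm_num)
          have : (0:ℝ) ≤ (ν : ℝ) := Nat.cast_nonneg ν
          nlinarith
    _ ≤ (p : ℝ) ^ (2 * ((ν : ℝ) + 1)) := by
          apply Real.rpow_le_rpow (by norm_num) (p_two p)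
          have : (0:ℝ) ≤ (ν : ℝ) := Nat.cast_nonneg ν
          nlinarith
  rw [xx, Real.rpow_neg (p_pos p).le]
  rw [inv_le_iff_one_le_mul₀ (by positivity)]
  nlinarith [Real.rpow_pos_of_pos (p_pos p) (2 * ((ν : ℝ) + 1))]

lemma one_sub_xx_pos (p : {p : ℕ // p.Prime}) (ν : ℕ) : 0 < 1 - xx p ν := by
  have := xx_le p ν; linarith

lemma abs_LL_le (p : {p : ℕ // p.Prime}) (ν : ℕ) : |LL p ν| ≤ 2 * xx p ν := by
  have hx := xx_pos p ν
  have hx2 := xx_le p ν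
  have h1 : (0:ℝ) < 1 - xx p ν := one_sub_xx_pos p ν
  have hL : LL p ν ≤ 0 := Real.log_nonpos (by linarith) (by linarith)
  rw [abs_of_nonpos hL, LL, ← Real.log_inv]
  have h2 := Real.log_le_sub_one_of_pos (x := (1 - xx p ν)⁻¹) (by positivity)
  have h3 : (1 - xx p ν)⁻¹ - 1 ≤ 2 * xx p ν := by
    rw [sub_le_iff_le_add, inv_le_iff_one_le_mul₀ h1]
    nlinarith
  linarith

end C2Aux

namespace C2Aux

lemma xx_eq (p : {p : ℕ // p.Prime}) (ν : ℕ) :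
    xx p ν = (p : ℝ) ^ (-2 : ℝ) * ((p : ℝ) ^ (-2 : ℝ)) ^ ν := by
  rw [xx, show -(2 * ((ν : ℝ) + 1)) = (-2) + (-2) * (ν : ℕ) by push_cast; ring,
    Real.rpow_add (p_pos p), Real.rpow_mul_natCast (p_pos p).le]

lemma summable_xx : Summable (fun q : {p : ℕ // p.Prime} × ℕ => xx q.1 q.2) := by
  have hf : Summable (fun p : {p : ℕ // p.Prime} => (p : ℝ) ^ (-2 : ℝ)) := by
    exact (Real.summable_nat_rpow.mpr (by norm_num)).subtype _
  have hg : Summable (fun ν : ℕ => ((1:ℝ)/4) ^ ν) :=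
    summable_geometric_of_lt_one (by norm_num) (by norm_num)
  have hS := hf.mul_of_nonneg hg
    (fun p => (Real.rpow_pos_of_pos (p_pos p) _).le) (fun ν => by positivity)
  refine hS.of_nonneg_of_le (fun q => (xx_pos q.1 q.2).le) (fun q => ?_)
  rw [xx_eq]
  refine mul_le_mul_of_nonneg_left ?_ (Real.rpow_pos_of_pos (p_pos q.1) _).le
  apply pow_le_pow_left₀ (Real.rpow_pos_of_pos (p_pos q.1) _).le
  rw [Real.rpow_neg (p_pos q.1).le, show ((1:ℝ)/4) = 4⁻¹ by norm_num]
  apply inv_anti₀ (by norm_num)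
  calc (4:ℝ) = (2:ℝ)^(2:ℝ) := by
        rw [show (2:ℝ) = ((2:ℕ):ℝ) by norm_num, Real.rpow_natCast]; norm_num
  _ ≤ (q.1 : ℝ) ^ (2:ℝ) := Real.rpow_le_rpow (by norm_num) (p_two q.1) (by norm_num)

lemma summable_LL : Summable (fun q : {p : ℕ // p.Prime} × ℕ => LL q.1 q.2) := by
  apply Summable.of_abs
  exact (summable_xx.mul_left 2).of_nonneg_of_le (fun q => abs_nonneg _)
    (fun q => abs_LL_le q.1 q.2)

end C2Aux

namespace C2Aux

lemma summable_LL_nu (ν : ℕ) : Summable (fun p : {p : ℕ // p.Prime} => LL p ν) :=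
  summable_LL.prod_symm.prod_factor ν

lemma summable_LL_p (p : {p : ℕ // p.Prime}) : Summable (fun ν : ℕ => LL p ν) :=
  summable_LL.prod_factor p

lemma hasProd_inv (ν : ℕ) :
    HasProd (fun p : {p : ℕ // p.Prime} => (1 - xx p ν)⁻¹)
      (Real.exp (-∑' p : {p : ℕ // p.Prime}, LL p ν)) := by
  have h := ((summable_LL_nu ν).hasSum.neg).rexp
  have h2 : (Real.exp ∘ fun p : {p : ℕ // p.Prime} => -(LL p ν))
      = fun p : {p : ℕ // p.Prime} => (1 - xx p ν)⁻¹ := by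
    funext p
    simp only [Function.comp_apply, Real.exp_neg, LL,
      Real.exp_log (one_sub_xx_pos p ν)]
  rwa [h2] at h

lemma zeta_real_eq (ν : ℕ) :
    (∑' m : ℕ, ((m : ℝ) + 1) ^ (-(2 * ((ν : ℝ) + 1))))
      = Real.exp (-∑' p : {p : ℕ // p.Prime}, LL p ν) := by
  set s : ℝ := 2 * ((ν : ℝ) + 1) with hs_def
  have hs0 : (0:ℝ) ≤ (ν:ℝ) := Nat.cast_nonneg ν
  have hs : 1 < ((s : ℂ)).re := by
    simp only [Complex.ofReal_re]; rw [hs_def]; nlinarith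
  have hfac : ∀ p : {p : ℕ // p.Prime},
      ((1 - xx p ν : ℝ) : ℂ)⁻¹ = (1 - (p : ℂ) ^ (-(s:ℂ)))⁻¹ := by
    intro p
    congr 1
    rw [Complex.ofReal_sub, Complex.ofReal_one]
    congr 1
    rw [xx, Complex.ofReal_cpow (by positivity : (0:ℝ) ≤ (p:ℝ)),
      show ((-(2*((ν:ℝ)+1)) : ℝ) : ℂ) = -(s:ℂ) by rw [hs_def]; push_cast; ring]
    norm_cast
  have hC : HasProd (fun p : {p : ℕ // p.Prime} => (1 - (p : ℂ) ^ (-(s:ℂ)))⁻¹)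
      ((Real.exp (-∑' p : {p : ℕ // p.Prime}, LL p ν) : ℝ) : ℂ) := by
    have h := (hasProd_inv ν).map Complex.ofRealHom Complex.continuous_ofReal
    have heq : (⇑Complex.ofRealHom ∘ fun p : {p : ℕ // p.Prime} => ((1 - xx p ν)⁻¹))
        = fun p : {p : ℕ // p.Prime} => (1 - (p : ℂ) ^ (-(s:ℂ)))⁻¹ := by
      funext p
      rw [Function.comp_apply, ← hfac p]
      simp [Complex.ofReal_inv]
    rwa [heq] at h
  have hEuler : HasProd (fun p : Nat.Primes => (1 - (p : ℂ) ^ (-(s:ℂ)))⁻¹)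
      (riemannZeta (s:ℂ)) := riemannZeta_eulerProduct_hasProd hs
  have hzeta : riemannZeta (s:ℂ)
      = ((Real.exp (-∑' p : {p : ℕ // p.Prime}, LL p ν) : ℝ) : ℂ) :=
    hEuler.unique hC
  have htsum : riemannZeta (s:ℂ)
      = ((∑' m : ℕ, ((m : ℝ) + 1) ^ (-s) : ℝ) : ℂ) := by
    rw [zeta_eq_tsum_one_div_nat_add_one_cpow hs, Complex.ofReal_tsum]
    congr 1
    funext n
    rw [Complex.ofReal_cpow (by positivity : (0:ℝ) ≤ (n:ℝ)+1)]
    push_cast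
    rw [Complex.cpow_neg, one_div]
  have := htsum.symm.trans hzeta
  exact_mod_cast this

end C2Aux

namespace C2Aux

lemma term_eq (p : {p : ℕ // p.Prime}) :
    ((p : ℂ) ^ ((1 : ℂ) / 12)) *
        dedekindEta (Complex.I * Real.log (p : ℕ) / Real.pi)
      = ((Real.exp (∑' ν : ℕ, LL p ν) : ℝ) : ℂ) := by
  have hπ : ((Real.pi : ℂ)) ≠ 0 := by
    exact_mod_cast Real.pi_ne_zero
  have hlogp : (0:ℝ) < (p : ℝ) := p_pos p
  rw [dedekindEta]
  -- inner factors
  have harg : ∀ ν : ℕ, 2 * (Real.pi : ℂ) * Complex.I * ((ν : ℂ) + 1) *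
      (Complex.I * (Real.log (p:ℕ) : ℂ) / (Real.pi : ℂ))
      = ((-(2 * ((ν:ℝ)+1) * Real.log (p:ℕ)) : ℝ) : ℂ) := by
    intro ν
    push_cast
    field_simp
    linear_combination (Complex.log ((p:ℕ):ℂ)) * Complex.I_sq
  have hfac : ∀ ν : ℕ, (1 - Complex.exp (2 * (Real.pi:ℂ) * Complex.I * ((ν : ℂ) + 1) *
      (Complex.I * (Real.log (p:ℕ):ℂ) / (Real.pi:ℂ))))
      = ((1 - xx p ν : ℝ) : ℂ) := by
    intro ν
    rw [harg ν, ← Complex.ofReal_exp, Complex.ofReal_sub, Complex.ofReal_one]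
    congr 2
    rw [xx, Real.rpow_def_of_pos hlogp]
    ring_nf
  have hp : HasProd (fun ν : ℕ => ((1 - xx p ν : ℝ) : ℂ))
      ((Real.exp (∑' ν : ℕ, LL p ν) : ℝ) : ℂ) := by
    have hr : HasProd (fun ν : ℕ => (1 - xx p ν)) (Real.exp (∑' ν : ℕ, LL p ν)) := by
      have h := (summable_LL_p p).hasSum.rexp
      have h2 : (Real.exp ∘ fun ν : ℕ => LL p ν) = fun ν : ℕ => 1 - xx p ν := by
        funext ν
        simp [LL, Real.exp_log (one_sub_xx_pos p ν)]
      rwa [h2] at h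
    have := hr.map Complex.ofRealHom Complex.continuous_ofReal
    exact this
  have hinner : (∏' ν : ℕ, (1 - Complex.exp (2 * (Real.pi:ℂ) * Complex.I * ((ν : ℂ) + 1) *
      (Complex.I * (Real.log (p:ℕ):ℂ) / (Real.pi:ℂ)))))
      = ((Real.exp (∑' ν : ℕ, LL p ν) : ℝ) : ℂ) := by
    rw [tprod_congr hfac]
    exact hp.tprod_eq
  rw [hinner]
  -- the prefactor
  have hpre : (Real.pi:ℂ) * Complex.I * (Complex.I * (Real.log (p:ℕ):ℂ) / (Real.pi:ℂ)) / 12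
      = ((-(Real.log (p:ℕ)) / 12 : ℝ) : ℂ) := by
    field_simp
    push_cast
    linear_combination (Complex.log ((p:ℕ):ℂ)) * Complex.I_sq
  rw [hpre, ← Complex.ofReal_exp]
  have h112 : ((p : ℂ) ^ ((1 : ℂ) / 12)) = (((p : ℝ) ^ ((1:ℝ)/12) : ℝ) : ℂ) := by
    rw [Complex.ofReal_cpow hlogp.le]
    norm_num
  rw [h112, ← Complex.ofReal_mul, ← Complex.ofReal_mul]
  congr 1
  have : Real.exp (-(Real.log (p:ℕ)) / 12) = (p : ℝ) ^ (-(1:ℝ)/12) := by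
    rw [Real.rpow_def_of_pos hlogp]
    ring_nf
  rw [this, ← mul_assoc, ← Real.rpow_add hlogp]
  norm_num

end C2Aux

namespace C2Aux

theorem final :
    (1 : ℂ) / ((∏' ν : ℕ, ∑' m : ℕ, ((m : ℝ) + 1) ^ (-(2 * ((ν : ℝ) + 1)))) : ℝ)
      = ∏' p : {p : ℕ // p.Prime},
          ((p : ℂ) ^ ((1 : ℂ) / 12)) *
            dedekindEta (Complex.I * Real.log (p : ℕ) / Real.pi) := by
  set T : ℝ := ∑' q : {p : ℕ // p.Prime} × ℕ, LL q.1 q.2 with hT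
  -- LHS
  have hsymm : Summable (fun q : ℕ × {p : ℕ // p.Prime} => LL q.2 q.1) :=
    summable_LL.prod_symm
  have hswap : (∑' q : ℕ × {p : ℕ // p.Prime}, LL q.2 q.1) = T :=
    Equiv.tsum_eq (Equiv.prodComm ℕ {p : ℕ // p.Prime})
      (fun q : {p : ℕ // p.Prime} × ℕ => LL q.1 q.2)
  have hT2 : HasSum (fun ν : ℕ => ∑' p : {p : ℕ // p.Prime}, LL p ν) T := by
    have h := HasSum.prod_fiberwise hsymm.hasSum (fun ν => (summable_LL_nu ν).hasSum)
    rwa [hswap] at h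
  have hLHS : HasProd (fun ν : ℕ => ∑' m : ℕ, ((m : ℝ) + 1) ^ (-(2 * ((ν : ℝ) + 1))))
      (Real.exp (-T)) := by
    have h := hT2.neg.rexp
    have h2 : (Real.exp ∘ fun ν : ℕ => -(∑' p : {p : ℕ // p.Prime}, LL p ν))
        = fun ν : ℕ => ∑' m : ℕ, ((m : ℝ) + 1) ^ (-(2 * ((ν : ℝ) + 1))) := by
      funext ν
      rw [Function.comp_apply]
      exact (zeta_real_eq ν).symm
    rwa [h2] at h
  -- RHS
  have hT1 : HasSum (fun p : {p : ℕ // p.Prime} => ∑' ν : ℕ, LL p ν) T :=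
    HasSum.prod_fiberwise summable_LL.hasSum (fun p => (summable_LL_p p).hasSum)
  have hRHS : HasProd (fun p : {p : ℕ // p.Prime} =>
      ((p : ℂ) ^ ((1 : ℂ) / 12)) *
        dedekindEta (Complex.I * Real.log (p : ℕ) / Real.pi))
      ((Real.exp T : ℝ) : ℂ) := by
    have h := (hT1.rexp.map Complex.ofRealHom Complex.continuous_ofReal)
    have h2 : (⇑Complex.ofRealHom ∘ (Real.exp ∘ fun p : {p : ℕ // p.Prime} =>
        ∑' ν : ℕ, LL p ν)) = fun p : {p : ℕ // p.Prime} =>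
        ((p : ℂ) ^ ((1 : ℂ) / 12)) *
          dedekindEta (Complex.I * Real.log (p : ℕ) / Real.pi) := by
      funext p
      rw [Function.comp_apply, Function.comp_apply, term_eq p]
      rfl
    rwa [h2] at h
  rw [hLHS.tprod_eq, hRHS.tprod_eq, Real.exp_neg]
  rw [one_div, ← Complex.ofReal_inv, inv_inv]

end C2Aux

/-- 1/C₂ = ∏_p p^{1/12} η(i log p / π), with C₂ = ∏_{ν=1}^∞ ζ(2ν). -/
theorem one_div_C2_eq_eta_prod :
    (1 : ℂ) / ((∏' ν : ℕ, ∑' m : ℕ, ((m : ℝ) + 1) ^ (-(2 * ((ν : ℝ) + 1)))) : ℝ)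
      = ∏' p : {p : ℕ // p.Prime},
          ((p : ℂ) ^ ((1 : ℂ) / 12)) *
            dedekindEta (Complex.I * Real.log (p : ℕ) / Real.pi) := by
  exact C2Aux.final
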